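/- Let g be a standard Gaussian random variable and s an independent random variable. Then E[Sign(g+s)·g] = √(2/π)·E[exp(-s²/2)]. -/

import Mathlib

open MeasureTheory ProbabilityTheory Filter

/-- The sign function: `Sign x = x / |x|` for `x ≠ 0`, `Sign 0 = 0`. -/
noncomputable def signFun (x : ℝ) : ℝ := if x = 0 then 0 else x / |x|

lemma measurable_signFun : Measurable signFun := by
  unfold signFun
  exact Measurable.ite (measurableSet_eq_fun measurable_id measurable_const)
    measurable_const (measurable_id.div (measurable_id.abs))

lemma abs_signFun_le (x : ℝ) : |signFun x| ≤ 1 := by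
  unfold signFun
  rcases eq_or_ne x 0 with h | h
  · simp [h]
  · rw [if_neg h, abs_div, abs_abs, div_self (abs_ne_zero.mpr h)]

lemma signFun_of_neg {x : ℝ} (h : x < 0) : signFun x = -1 := by
  rw [signFun, if_neg h.ne, abs_of_neg h, div_neg, div_self h.ne]

lemma signFun_of_pos {x : ℝ} (h : 0 < x) : signFun x = 1 := by
  rw [signFun, if_neg h.ne', abs_of_pos h, div_self h.ne']

open Real in
lemma integrable_xexp : Integrable (fun x : ℝ => x * rexp (-x ^ 2 / 2)) := by
  have := integrable_mul_exp_neg_mul_sq (b := 1/2) (by norm_num)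
  convert this using 2 with x
  ring_nf

open Real in
lemma hasDerivAt_negexp (x : ℝ) :
    HasDerivAt (fun x : ℝ => -rexp (-x ^ 2 / 2)) (x * rexp (-x ^ 2 / 2)) x := by
  have h1 : HasDerivAt (fun x : ℝ => -x ^ 2 / 2) (-x) x := by
    have := ((hasDerivAt_pow 2 x).neg).div_const 2
    refine this.congr_deriv ?_
    simp
    ring
  have := (h1.exp).neg
  refine this.congr_deriv ?_
  ring

open Real in
lemma tendsto_negexp_atTop :
    Filter.Tendsto (fun x : ℝ => -rexp (-x ^ 2 / 2)) Filter.atTop (nhds 0) := by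
  rw [← neg_zero]
  refine Filter.Tendsto.neg ?_
  have h : Filter.Tendsto (fun x : ℝ => x ^ 2 / 2) Filter.atTop Filter.atTop :=
    (tendsto_pow_atTop two_ne_zero).atTop_div_const (by norm_num)
  have := Real.tendsto_exp_atBot.comp ((Filter.tendsto_neg_atTop_atBot).comp h)
  convert this using 2 with x
  simp [Function.comp, neg_div]

open Real in
lemma tendsto_negexp_atBot :
    Filter.Tendsto (fun x : ℝ => -rexp (-x ^ 2 / 2)) Filter.atBot (nhds 0) := by
  rw [← neg_zero]
  refine Filter.Tendsto.neg ?_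
  have h : Filter.Tendsto (fun x : ℝ => x ^ 2 / 2) Filter.atBot Filter.atTop := by
    have h2 : Filter.Tendsto (fun x : ℝ => |x| ^ 2) Filter.atBot Filter.atTop :=
      (tendsto_pow_atTop two_ne_zero).comp tendsto_abs_atBot_atTop
    simpa [sq_abs] using h2.atTop_div_const (by norm_num : (0:ℝ) < 2)
  have := Real.tendsto_exp_atBot.comp ((Filter.tendsto_neg_atTop_atBot).comp h)
  convert this using 2 with x
  simp [Function.comp, neg_div]

open Real in
lemma gaussianPDFReal_zero_one (x : ℝ) :
    gaussianPDFReal 0 1 x = (Real.sqrt (2 * π))⁻¹ * rexp (-x ^ 2 / 2) := by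
  simp [gaussianPDFReal]

open Real in
lemma ae_ne_real (c : ℝ) : ∀ᵐ x : ℝ, x ≠ c := by
  refine ae_iff.mpr ?_
  simp only [not_not, Set.setOf_eq_eq_singleton]
  exact measure_singleton c

open Real in
lemma sqrt_const_eq : (Real.sqrt (2 * π))⁻¹ * 2 = Real.sqrt (2 / π) := by
  have hpi : (0:ℝ) < π := pi_pos
  have hne : Real.sqrt (2 * π) ≠ 0 := by positivity
  rw [inv_mul_eq_div, div_eq_iff hne, eq_comm, ← Real.sqrt_mul (by positivity)]
  rw [show (2 / π) * (2 * π) = 2 ^ 2 by field_simp, Real.sqrt_sq (by norm_num)]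

open Real in
lemma integrable_sign_xexp (y : ℝ) :
    Integrable (fun x : ℝ => signFun (x + y) * (x * rexp (-x ^ 2 / 2))) := by
  refine integrable_xexp.mono ?_ (Filter.Eventually.of_forall fun x => ?_)
  · exact ((measurable_signFun.comp (measurable_id.add_const y)).mul
      (measurable_id.mul (((measurable_id.pow_const 2).neg.div_const 2).exp))).aestronglyMeasurable
  · simp only [Real.norm_eq_abs, abs_mul]
    exact mul_le_of_le_one_left (by positivity) (abs_signFun_le _)

open Real in
lemma key_integral (y : ℝ) :
    ∫ x, signFun (x + y) * x ∂(gaussianReal 0 1)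
      = Real.sqrt (2 / Real.pi) * Real.exp (-y ^ 2 / 2) := by
  have hmeas : Measurable fun x : ℝ => (gaussianPDFReal 0 1 x).toNNReal :=
    (measurable_gaussianPDFReal 0 1).real_toNNReal
  rw [gaussianReal_of_var_ne_zero 0 one_ne_zero,
    show gaussianPDF 0 1 = fun x => ((gaussianPDFReal 0 1 x).toNNReal : ENNReal) from rfl,
    integral_withDensity_eq_integral_smul hmeas]
  have heq : (fun x : ℝ => (gaussianPDFReal 0 1 x).toNNReal • (signFun (x + y) * x))
      = fun x => (Real.sqrt (2 * π))⁻¹ * (signFun (x + y) * (x * rexp (-x ^ 2 / 2))) := by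
    funext x
    rw [NNReal.smul_def, smul_eq_mul, Real.coe_toNNReal _ (gaussianPDFReal_nonneg 0 1 x),
      gaussianPDFReal_zero_one]
    ring
  rw [heq, integral_const_mul]
  -- split the integral at -y
  have hIic : ∫ x in Set.Iic (-y), x * rexp (-x ^ 2 / 2) = -rexp (-y ^ 2 / 2) - 0 := by
    have := integral_Iic_of_hasDerivAt_of_tendsto' (a := -y)
      (fun x _ => hasDerivAt_negexp x) integrable_xexp.integrableOn tendsto_negexp_atBot
    simpa using this
  have hIoi : ∫ x in Set.Ioi (-y), x * rexp (-x ^ 2 / 2) = 0 - -rexp (-y ^ 2 / 2) := by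
    have := integral_Ioi_of_hasDerivAt_of_tendsto' (a := -y)
      (fun x _ => hasDerivAt_negexp x) integrable_xexp.integrableOn tendsto_negexp_atTop
    simpa using this
  have e1 : ∫ x in Set.Iic (-y), signFun (x + y) * (x * rexp (-x ^ 2 / 2))
      = ∫ x in Set.Iic (-y), -(x * rexp (-x ^ 2 / 2)) := by
    refine setIntegral_congr_ae measurableSet_Iic ?_
    filter_upwards [ae_ne_real (-y)] with x hx hx'
    rw [signFun_of_neg (by rcases lt_of_le_of_ne hx' hx with h; linarith)]
    ring
  have e2 : ∫ x in Set.Ioi (-y), signFun (x + y) * (x * rexp (-x ^ 2 / 2))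
      = ∫ x in Set.Ioi (-y), x * rexp (-x ^ 2 / 2) := by
    refine setIntegral_congr_ae measurableSet_Ioi ?_
    filter_upwards with x hx'
    rw [signFun_of_pos (by simp only [Set.mem_Ioi] at hx'; linarith)]
    ring
  rw [← intervalIntegral.integral_Iic_add_Ioi (b := -y) (integrable_sign_xexp y).integrableOn
    (integrable_sign_xexp y).integrableOn, e1, e2, integral_neg, hIic, hIoi]
  rw [show -(-rexp (-y ^ 2 / 2) - 0) + (0 - -rexp (-y ^ 2 / 2)) = 2 * rexp (-y ^ 2 / 2) by ring,
    ← mul_assoc, sqrt_const_eq]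

theorem sign_gaussian_expectation
    {Ω : Type*} [MeasurableSpace Ω] (μ : Measure Ω) [IsProbabilityMeasure μ]
    (g s : Ω → ℝ) (hgm : Measurable g) (hsm : Measurable s)
    (hg : μ.map g = gaussianReal 0 1) (hind : IndepFun g s μ) :
    ∫ ω, signFun (g ω + s ω) * g ω ∂μ
      = Real.sqrt (2 / Real.pi) * ∫ ω, Real.exp (-(s ω) ^ 2 / 2) ∂μ := by
  have hν : IsProbabilityMeasure (μ.map s) := Measure.isProbabilityMeasure_map hsm.aemeasurable
  have hprod : μ.map (fun ω => (g ω, s ω)) = (gaussianReal 0 1).prod (μ.map s) := by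
    rw [← hg]
    exact (indepFun_iff_map_prod_eq_prod_map_map hgm.aemeasurable hsm.aemeasurable).mp hind
  have hFmeas : Measurable (fun p : ℝ × ℝ => signFun (p.1 + p.2) * p.1) :=
    (measurable_signFun.comp (measurable_fst.add measurable_snd)).mul measurable_fst
  -- integrability of the identity w.r.t. the Gaussian
  have hid : Integrable (fun x : ℝ => x) (gaussianReal 0 1) := by
    rw [gaussianReal_of_var_ne_zero 0 one_ne_zero,
      show gaussianPDF 0 1 = fun x => ((gaussianPDFReal 0 1 x).toNNReal : ENNReal) from rfl,
      integrable_withDensity_iff_integrable_smul ((measurable_gaussianPDFReal 0 1).real_toNNReal)]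
    have heq : (fun x : ℝ => (gaussianPDFReal 0 1 x).toNNReal • x)
        = fun x => (Real.sqrt (2 * Real.pi))⁻¹ * (x * Real.exp (-x ^ 2 / 2)) := by
      funext x
      rw [NNReal.smul_def, smul_eq_mul, Real.coe_toNNReal _ (gaussianPDFReal_nonneg 0 1 x),
        gaussianPDFReal_zero_one]
      ring
    rw [heq]
    exact integrable_xexp.const_mul _
  have h1 : Integrable (fun p : ℝ × ℝ => p.1) ((gaussianReal 0 1).prod (μ.map s)) := by
    have hmap : ((gaussianReal 0 1).prod (μ.map s)).map Prod.fst = gaussianReal 0 1 := by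
      rw [Measure.map_fst_prod]
      simp
    have h2 : Integrable (fun x : ℝ => x) (((gaussianReal 0 1).prod (μ.map s)).map Prod.fst) := by
      rw [hmap]; exact hid
    exact (integrable_map_measure measurable_id.aestronglyMeasurable
      measurable_fst.aemeasurable).mp h2
  have hF : Integrable (fun p : ℝ × ℝ => signFun (p.1 + p.2) * p.1)
      ((gaussianReal 0 1).prod (μ.map s)) := by
    refine h1.mono hFmeas.aestronglyMeasurable (Filter.Eventually.of_forall fun p => ?_)
    simp only [Real.norm_eq_abs, abs_mul]
    exact mul_le_of_le_one_left (abs_nonneg _) (abs_signFun_le _)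
  calc ∫ ω, signFun (g ω + s ω) * g ω ∂μ
      = ∫ p : ℝ × ℝ, signFun (p.1 + p.2) * p.1 ∂((gaussianReal 0 1).prod (μ.map s)) := by
        rw [← hprod,
          integral_map (hgm.prodMk hsm).aemeasurable hFmeas.aestronglyMeasurable]
    _ = ∫ b, ∫ a, signFun (a + b) * a ∂(gaussianReal 0 1) ∂(μ.map s) :=
        integral_prod_symm _ hF
    _ = ∫ b, Real.sqrt (2 / Real.pi) * Real.exp (-b ^ 2 / 2) ∂(μ.map s) := by
        simp only [key_integral]
    _ = Real.sqrt (2 / Real.pi) * ∫ b, Real.exp (-b ^ 2 / 2) ∂(μ.map s) :=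
        integral_const_mul _ _
    _ = Real.sqrt (2 / Real.pi) * ∫ ω, Real.exp (-(s ω) ^ 2 / 2) ∂μ := by
        rw [integral_map hsm.aemeasurable]
        exact (Continuous.aestronglyMeasurable (by continuity))
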